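/- Let w : ℝ^d → ℝ be semiconcave (i.e. y ↦ w(y) − |y|²/(2δ) is concave for some δ > 0). If w can be touched from below at a point y₀ by a differentiable function (i.e. there exists differentiable φ with φ ≤ w near y₀ and φ(y₀) = w(y₀)), then w is differentiable at y₀. -/

import Mathlib

open Filter

theorem stmt_16 {d : ℕ} (δ : ℝ) (hδ : 0 < δ)
    (w : EuclideanSpace ℝ (Fin d) → ℝ)
    (hconc : ConcaveOn ℝ Set.univ (fun y => w y - ‖y‖ ^ 2 / (2 * δ)))
    (y₀ : EuclideanSpace ℝ (Fin d))
    (φ : EuclideanSpace ℝ (Fin d) → ℝ)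
    (hφ : DifferentiableAt ℝ φ y₀)
    (htouch : φ y₀ = w y₀)
    (hle : ∀ᶠ y in nhds y₀, φ y ≤ w y) :
    DifferentiableAt ℝ w y₀ := by
  set q : EuclideanSpace ℝ (Fin d) → ℝ := fun y => ‖y‖ ^ 2 / (2 * δ) with hqdef
  have hqd : Differentiable ℝ q := by
    have h : q = fun y => (1 / (2 * δ)) * ‖y‖ ^ 2 := by
      funext y; rw [hqdef]; ring
    rw [h]
    exact ((contDiff_norm_sq (𝕜 := ℝ)).differentiable one_ne_zero).const_mul _
  set g : EuclideanSpace ℝ (Fin d) → ℝ := fun y => w y - q y with hgdef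
  set ψ : EuclideanSpace ℝ (Fin d) → ℝ := fun y => φ y - q y with hψdef
  have hψd : DifferentiableAt ℝ ψ y₀ := hφ.sub (hqd y₀)
  set L := fderiv ℝ ψ y₀ with hLdef
  have hL : HasFDerivAt ψ L y₀ := hψd.hasFDerivAt
  clear_value q g ψ L
  have hψg : ψ y₀ = g y₀ := by simp [hψdef, hgdef, htouch]
  have hle' : ∀ᶠ y in nhds y₀, ψ y ≤ g y := by
    filter_upwards [hle] with y hy
    simpa [hψdef, hgdef] using sub_le_sub_right hy (q y)
  -- key inequality
  have key : ∀ v : EuclideanSpace ℝ (Fin d), g (y₀ + v) - g y₀ ≤ L v := by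
    intro v
    have h1 : HasDerivAt (fun t : ℝ => y₀ - t • v) (-v) 0 := by
      simpa using ((hasDerivAt_id (0:ℝ)).smul_const v).const_sub y₀
    have h2 : HasFDerivAt ψ L (y₀ - (0:ℝ) • v) := by simpa using hL
    have hline : HasDerivAt (fun t : ℝ => ψ (y₀ - t • v)) (-(L v)) 0 := by
      have := h2.comp_hasDerivAt 0 h1
      rw [map_neg] at this; exact this
    have hslope := hasDerivAt_iff_tendsto_slope.mp hline
    have hslope' : Tendsto (fun t => -slope (fun s : ℝ => ψ (y₀ - s • v)) 0 t)
        (nhdsWithin 0 (Set.Ioi 0)) (nhds (L v)) := by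
      have := (hslope.mono_left
        (nhdsWithin_mono 0 (fun t (ht : t ∈ Set.Ioi 0) => ne_of_gt ht))).neg
      simpa using this
    refine ge_of_tendsto hslope' ?_
    have hev1 : ∀ᶠ t : ℝ in nhdsWithin 0 (Set.Ioi 0), t < 1 :=
      eventually_nhdsWithin_of_eventually_nhds (eventually_lt_nhds zero_lt_one)
    have hcont : Continuous (fun t : ℝ => y₀ - t • v) :=
      continuous_const.sub (continuous_id.smul continuous_const)
    have hev2 : ∀ᶠ t : ℝ in nhdsWithin 0 (Set.Ioi 0),
        ψ (y₀ - t • v) ≤ g (y₀ - t • v) := by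
      have h0 : Tendsto (fun t : ℝ => y₀ - t • v) (nhds 0) (nhds y₀) := by
        have := hcont.tendsto 0
        simpa using this
      exact (h0.eventually hle').filter_mono nhdsWithin_le_nhds
    filter_upwards [self_mem_nhdsWithin, hev1, hev2] with t ht ht1 htψ
    have ht0 : (0:ℝ) < t := ht
    have hc1 : t • g (y₀ + v) + (1 - t) • g y₀ ≤ g (t • (y₀ + v) + (1 - t) • y₀) :=
      hconc.2 (Set.mem_univ _) (Set.mem_univ _) ht0.le (by linarith) (by ring)
    have hpt1 : t • (y₀ + v) + (1 - t) • y₀ = y₀ + t • v := by module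
    rw [hpt1] at hc1
    have hc2 : (1/2 : ℝ) • g (y₀ + t • v) + (1/2 : ℝ) • g (y₀ - t • v) ≤
        g ((1/2 : ℝ) • (y₀ + t • v) + (1/2 : ℝ) • (y₀ - t • v)) :=
      hconc.2 (Set.mem_univ _) (Set.mem_univ _) (by norm_num) (by norm_num) (by norm_num)
    have hpt2 : (1/2 : ℝ) • (y₀ + t • v) + (1/2 : ℝ) • (y₀ - t • v) = y₀ := by module
    rw [hpt2] at hc2
    have hslope_eq : -slope (fun s : ℝ => ψ (y₀ - s • v)) 0 t
        = (ψ y₀ - ψ (y₀ - t • v)) / t := by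
      rw [slope_def_field]
      simp only [zero_smul, sub_zero]
      ring
    rw [hslope_eq, le_div_iff₀ ht0]
    simp only [smul_eq_mul] at hc1 hc2
    have hgoal : (g (y₀ + v) - g y₀) * t = t * g (y₀ + v) - t * g y₀ := by ring
    rw [hgoal]
    linarith [hc1, hc2, htψ, hψg]
  -- differentiability of g
  have hgd : HasFDerivAt g L y₀ := by
    rw [hasFDerivAt_iff_isLittleO_nhds_zero]
    have hψo := hasFDerivAt_iff_isLittleO_nhds_zero.mp hL
    have hbig : (fun v => g (y₀ + v) - g y₀ - L v)
        =O[nhds 0] (fun v => ψ (y₀ + v) - ψ y₀ - L v) := by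
      apply Asymptotics.IsBigO.of_bound 1
      have h0 : Tendsto (fun v : EuclideanSpace ℝ (Fin d) => y₀ + v)
          (nhds 0) (nhds y₀) := by
        have : Continuous (fun v : EuclideanSpace ℝ (Fin d) => y₀ + v) :=
          continuous_const.add continuous_id
        have := this.tendsto 0
        simpa using this
      filter_upwards [h0.eventually hle'] with v hv
      rw [one_mul, Real.norm_eq_abs, Real.norm_eq_abs]
      have ha : g (y₀ + v) - g y₀ - L v ≤ 0 := by
        have := key v; linarith
      have hb : ψ (y₀ + v) - ψ y₀ - L v ≤ g (y₀ + v) - g y₀ - L v := by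
        rw [hψg]; linarith
      rw [abs_of_nonpos ha]
      exact le_trans (by linarith) (neg_le_abs _)
    exact hbig.trans_isLittleO hψo
  have heq : (fun y => g y + q y) = w := by
    funext y; simp [hgdef]
  have hfin : DifferentiableAt ℝ (fun y => g y + q y) y₀ :=
    hgd.differentiableAt.add (hqd y₀)
  rwa [heq] at hfin
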